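/- Let U = exp((1/2)Σ_{j,k} h_{jk} γ_jγ_k + i Σ_j d_j γ_j) with h a real antisymmetric 2n×2n matrix and d ∈ ℝ^{2n} (U is unitary), and let O = (1/2)Σ_{j,k} M_{jk} γ_jγ_k + Σ_j v_j γ_j with M complex antisymmetric and v ∈ ℂ^{2n}. Then U O U† = (1/2)Σ_{j,k} A_{jk} γ_jγ_k + Σ_j u_j γ_j, where A (complex antisymmetric) and u ∈ ℂ^{2n} are determined by the matrix identity [[A, i·u],[−i·uᵀ, 0]] = R(h,d) · [[M, i·v],[−i·vᵀ, 0]] · R(h,d)ᵀ. -/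

import Mathlib

open scoped Matrix ComplexOrder

namespace DG

noncomputable section

/-- 2×2 Pauli matrices -/
def PX : Matrix (Fin 2) (Fin 2) ℂ := !![0, 1; 1, 0]
def PY : Matrix (Fin 2) (Fin 2) ℂ := !![0, -Complex.I; Complex.I, 0]
def PZ : Matrix (Fin 2) (Fin 2) ℂ := !![1, 0; 0, -1]

/-- Kronecker (tensor) product of `n` 2×2 matrices, as a matrix indexed by `Fin n → Fin 2`. -/
def tensor {n : ℕ} (f : Fin n → Matrix (Fin 2) (Fin 2) ℂ) :
    Matrix (Fin n → Fin 2) (Fin n → Fin 2) ℂ :=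
  Matrix.of fun x y => ∏ i, f i (x i) (y i)

/-- Majorana operators on `n` qubits via Jordan–Wigner (0-based indexing:
`γ (2j) = Z^{⊗j} ⊗ X ⊗ I`, `γ (2j+1) = Z^{⊗j} ⊗ Y ⊗ I`). -/
def γ (n : ℕ) (j : Fin (2 * n)) : Matrix (Fin n → Fin 2) (Fin n → Fin 2) ℂ :=
  tensor fun i =>
    if i.val < j.val / 2 then PZ
    else if i.val = j.val / 2 then (if j.val % 2 = 0 then PX else PY)
    else 1

/-- Ordered (increasing) product `γ_J` over a finite index set `J`. -/
def γProd (n : ℕ) (J : Finset (Fin (2 * n))) :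
    Matrix (Fin n → Fin 2) (Fin n → Fin 2) ℂ :=
  ((J.sort (· ≤ ·)).map (γ n)).prod

/-- Moments `A_J = Tr(γ_J† A)`. -/
def moment (n : ℕ) (A : Matrix (Fin n → Fin 2) (Fin n → Fin 2) ℂ)
    (J : Finset (Fin (2 * n))) : ℂ :=
  Matrix.trace ((γProd n J)ᴴ * A)

/-- The Grassmann algebra on `2n` anticommuting generators. -/
abbrev Grass (n : ℕ) := ExteriorAlgebra ℂ (Fin (2 * n) → ℂ)

/-- Grassmann generators. -/
def η (n : ℕ) (j : Fin (2 * n)) : Grass n :=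
  ExteriorAlgebra.ι ℂ (Pi.single j 1)

/-- Ordered product `η_J`. -/
def ηProd (n : ℕ) (J : Finset (Fin (2 * n))) : Grass n :=
  ((J.sort (· ≤ ·)).map (η n)).prod

/-- Fourier (Grassmann) transform `Ξ_A = Σ_J A_J η_J`. -/
def Xi (n : ℕ) (A : Matrix (Fin n → Fin 2) (Fin n → Fin 2) ℂ) : Grass n :=
  ∑ J : Finset (Fin (2 * n)), moment n A J • ηProd n J

/-- Exponential in the Grassmann algebra as a finite power series. -/
def gExp (n : ℕ) (x : Grass n) : Grass n :=
  ∑ k ∈ Finset.range (2 * n + 1), ((k.factorial : ℂ))⁻¹ • x ^ k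

/-- The Gaussian exponent `(i/2) Σ M_{jk} η_j η_k + Σ d_j η_j`. -/
def gaussArg (n : ℕ) (M : Matrix (Fin (2 * n)) (Fin (2 * n)) ℝ) (d : Fin (2 * n) → ℝ) :
    Grass n :=
  (Complex.I / 2) • ∑ j, ∑ k, (M j k : ℂ) • (η n j * η n k) + ∑ j, (d j : ℂ) • η n j

/-- `ρ` is a displaced Gaussian state (Fourier characterization). -/
def IsDisplacedGaussian (n : ℕ) (ρ : Matrix (Fin n → Fin 2) (Fin n → Fin 2) ℂ) : Prop :=
  ∃ (M : Matrix (Fin (2 * n)) (Fin (2 * n)) ℝ) (d : Fin (2 * n) → ℝ),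
    Mᵀ = -M ∧ Xi n ρ = gExp n (gaussArg n M d)

/-- `ρ` is an even Gaussian state (Fourier characterization with zero mean). -/
def IsEvenGaussian (n : ℕ) (ρ : Matrix (Fin n → Fin 2) (Fin n → Fin 2) ℂ) : Prop :=
  ∃ (M : Matrix (Fin (2 * n)) (Fin (2 * n)) ℝ),
    Mᵀ = -M ∧ Xi n ρ = gExp n (gaussArg n M 0)

/-- Mean vector `μ(ρ)_j = Tr(γ_j ρ)`. -/
def meanVec (n : ℕ) (ρ : Matrix (Fin n → Fin 2) (Fin n → Fin 2) ℂ) (j : Fin (2 * n)) : ℂ :=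
  Matrix.trace (γ n j * ρ)

/-- Antisymmetric covariance matrix: `Σ(ρ)_{jk} = Tr((γ_jγ_k)† ρ)` for `j < k`. -/
def covMat (n : ℕ) (ρ : Matrix (Fin n → Fin 2) (Fin n → Fin 2) ℂ) :
    Matrix (Fin (2 * n)) (Fin (2 * n)) ℂ :=
  Matrix.of fun j k =>
    if j < k then Matrix.trace ((γ n j * γ n k)ᴴ * ρ)
    else if k < j then -Matrix.trace ((γ n k * γ n j)ᴴ * ρ)
    else 0

/-- The block matrix `[[M, i·d], [−i·dᵀ, 0]]`. -/
def extBlock {m : ℕ} (M : Matrix (Fin m) (Fin m) ℂ) (d : Fin m → ℂ) :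
    Matrix (Fin (m + 1)) (Fin (m + 1)) ℂ :=
  Matrix.of fun a b =>
    if ha : a.val < m then
      (if hb : b.val < m then M ⟨a, ha⟩ ⟨b, hb⟩ else Complex.I * d ⟨a, ha⟩)
    else (if hb : b.val < m then -(Complex.I * d ⟨b, hb⟩) else 0)

/-- Extended covariance matrix `Σ̃(ρ) = [[Σ(ρ), i·μ(ρ)], [−i·μ(ρ)ᵀ, 0]]`. -/
def extCov (n : ℕ) (ρ : Matrix (Fin n → Fin 2) (Fin n → Fin 2) ℂ) :
    Matrix (Fin (2 * n + 1)) (Fin (2 * n + 1)) ℂ :=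
  extBlock (covMat n ρ) (meanVec n ρ)

/-- Displaced quadratic Hamiltonian exponent
`(1/2) Σ h_{jk} γ_j γ_k + i Σ d_j γ_j`. -/
def quadArg (n : ℕ) (h : Matrix (Fin (2 * n)) (Fin (2 * n)) ℝ) (d : Fin (2 * n) → ℝ) :
    Matrix (Fin n → Fin 2) (Fin n → Fin 2) ℂ :=
  (1 / 2 : ℂ) • ∑ j, ∑ k, (h j k : ℂ) • (γ n j * γ n k)
    + Complex.I • ∑ j, (d j : ℂ) • γ n j

/-- The displaced Gaussian unitary `U = exp((1/2) Σ h_{jk} γ_jγ_k + i Σ d_j γ_j)`. -/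
def dgUnitary (n : ℕ) (h : Matrix (Fin (2 * n)) (Fin (2 * n)) ℝ) (d : Fin (2 * n) → ℝ) :
    Matrix (Fin n → Fin 2) (Fin n → Fin 2) ℂ :=
  NormedSpace.exp (quadArg n h d)

/-- The real block matrix `[[h, −d], [dᵀ, 0]]`. -/
def extBlockR {m : ℕ} (h : Matrix (Fin m) (Fin m) ℝ) (d : Fin m → ℝ) :
    Matrix (Fin (m + 1)) (Fin (m + 1)) ℝ :=
  Matrix.of fun a b =>
    if ha : a.val < m then
      (if hb : b.val < m then h ⟨a, ha⟩ ⟨b, hb⟩ else -d ⟨a, ha⟩)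
    else (if hb : b.val < m then d ⟨b, hb⟩ else 0)

/-- The rotation `R(h,d) = exp(2·[[h, −d], [dᵀ, 0]]) ∈ SO(2n+1, ℝ)`. -/
def Rmat (n : ℕ) (h : Matrix (Fin (2 * n)) (Fin (2 * n)) ℝ) (d : Fin (2 * n) → ℝ) :
    Matrix (Fin (2 * n + 1)) (Fin (2 * n + 1)) ℝ :=
  NormedSpace.exp ((2 : ℝ) • extBlockR h d)

/-- The Pfaffian of a `k × k` matrix (zero if `k` is odd; 1 for the empty matrix). -/
def pf {k : ℕ} (B : Matrix (Fin k) (Fin k) ℂ) : ℂ :=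
  if h : k % 2 = 0 then
    ((2 : ℂ) ^ (k / 2) * ((k / 2).factorial : ℂ))⁻¹ *
      ∑ σ : Equiv.Perm (Fin k), (Equiv.Perm.sign σ : ℂ) *
        ∏ l : Fin (k / 2),
          B (σ ⟨2 * l.val, by have := l.isLt; omega⟩)
            (σ ⟨2 * l.val + 1, by have := l.isLt; omega⟩)
  else 0

/-- Restriction `B|_J` of a matrix to the rows and columns indexed by `J` (in order). -/
def restr {N : ℕ} (B : Matrix (Fin N) (Fin N) ℂ) (J : Finset (Fin N)) :
    Matrix (Fin J.card) (Fin J.card) ℂ :=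
  B.submatrix (J.orderEmbOfFin rfl) (J.orderEmbOfFin rfl)

/-- `J̃ = J` if `|J|` even, `J ∪ {2n+1}` if `|J|` odd. -/
def tilde {n : ℕ} (J : Finset (Fin (2 * n))) : Finset (Fin (2 * n + 1)) :=
  if Odd J.card then insert (Fin.last (2 * n)) (J.map Fin.castSuccEmb)
  else J.map Fin.castSuccEmb

end

end DG
namespace DG
noncomputable section

/-- The quadratic polynomial `(1/2) Σ M_{jk} γ_jγ_k + Σ v_j γ_j` (complex coefficients). -/
def quadPolyC (n : ℕ) (M : Matrix (Fin (2 * n)) (Fin (2 * n)) ℂ) (v : Fin (2 * n) → ℂ) :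
    Matrix (Fin n → Fin 2) (Fin n → Fin 2) ℂ :=
  (1 / 2 : ℂ) • ∑ j, ∑ k, M j k • (γ n j * γ n k) + ∑ j, v j • γ n j

/-- The Hermitian quadratic Hamiltonian `H = (i/2) Σ h_{jk} γ_jγ_k + Σ d_j γ_j`. -/
def hamil (n : ℕ) (h : Matrix (Fin (2 * n)) (Fin (2 * n)) ℝ) (d : Fin (2 * n) → ℝ) :
    Matrix (Fin n → Fin 2) (Fin n → Fin 2) ℂ :=
  (Complex.I / 2) • ∑ j, ∑ k, (h j k : ℂ) • (γ n j * γ n k) + ∑ j, (d j : ℂ) • γ n j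

/-- The diagonalized Gaussian state `⊗_j (I + λ_j Z)/2`. -/
def diagGauss (n : ℕ) (l : Fin n → ℝ) : Matrix (Fin n → Fin 2) (Fin n → Fin 2) ℂ :=
  tensor fun j => (2 : ℂ)⁻¹ • (1 + (l j : ℂ) • PZ)

/-- The Pauli `Z` acting on line `j`: `Z_j = I^{⊗(j-1)} ⊗ Z ⊗ I^{⊗(n-j)}`. -/
def Zline (n : ℕ) (j : Fin n) : Matrix (Fin n → Fin 2) (Fin n → Fin 2) ℂ :=
  tensor fun i => if i = j then PZ else 1

/-- Measurement projector `O(K,x) = Π_{j ∈ K} (I + (−1)^{x_j} Z_j)/2`. -/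
def measOp (n : ℕ) (K : Finset (Fin n)) (x : Fin n → Bool) :
    Matrix (Fin n → Fin 2) (Fin n → Fin 2) ℂ :=
  ((K.sort (· ≤ ·)).map
    (fun j => (2 : ℂ)⁻¹ • (1 + (if x j then (-1 : ℂ) else 1) • Zline n j))).prod

/-- Tensoring a 2×2 matrix on a new last qubit line: `A ⊗ u`. -/
def extQ {n : ℕ} (A : Matrix (Fin n → Fin 2) (Fin n → Fin 2) ℂ)
    (u : Matrix (Fin 2) (Fin 2) ℂ) :
    Matrix (Fin (n + 1) → Fin 2) (Fin (n + 1) → Fin 2) ℂ :=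
  Matrix.of fun a b =>
    A (fun i => a i.castSucc) (fun i => b i.castSucc) * u (a (Fin.last n)) (b (Fin.last n))

/-- The state `|+⟩⟨+|`. -/
def plusState : Matrix (Fin 2) (Fin 2) ℂ := (2 : ℂ)⁻¹ • !![1, 1; 1, 1]

/-- The extended antisymmetric generator `h̃` of the even embedding of a displaced
Gaussian unitary. -/
def htilde {n : ℕ} (h : Matrix (Fin (2 * n)) (Fin (2 * n)) ℝ) (d : Fin (2 * n) → ℝ) :
    Matrix (Fin (2 * (n + 1))) (Fin (2 * (n + 1))) ℝ :=
  Matrix.of fun j k =>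
    if hj : j.val < 2 * n then
      (if hk : k.val < 2 * n then h ⟨j, hj⟩ ⟨k, hk⟩
       else if k.val = 2 * n + 1 then -d ⟨j, hj⟩ else 0)
    else if j.val = 2 * n + 1 then (if hk : k.val < 2 * n then d ⟨k, hk⟩ else 0) else 0

/-- The embedding unitary `V = exp(−i (π/4) γ_{2n+2})` on `n+1` qubits. -/
def embedV (n : ℕ) : Matrix (Fin (n + 1) → Fin 2) (Fin (n + 1) → Fin 2) ℂ :=
  NormedSpace.exp ((-(Real.pi / 4 : ℝ) * Complex.I) • γ (n + 1) ⟨2 * n + 1, by omega⟩)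

end
end DG
set_option linter.dupNamespace false
set_option maxHeartbeats 1000000
namespace DG
noncomputable section
open Matrix

/-! ### Pauli matrix facts -/

private lemma PX_sq : PX * PX = 1 := by
  ext i j; fin_cases i <;> fin_cases j <;>
    simp [PX, Matrix.mul_apply, Fin.sum_univ_two, Matrix.one_apply]

private lemma PY_sq : PY * PY = 1 := by
  ext i j; fin_cases i <;> fin_cases j <;>
    simp [PY, Matrix.mul_apply, Fin.sum_univ_two, Matrix.one_apply, Complex.I_mul_I]

private lemma PZ_sq : PZ * PZ = 1 := by
  ext i j; fin_cases i <;> fin_cases j <;>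
    simp [PZ, Matrix.mul_apply, Fin.sum_univ_two, Matrix.one_apply]

private lemma PXY_anti : PX * PY = -(PY * PX) := by
  ext i j; fin_cases i <;> fin_cases j <;>
    simp [PX, PY, Matrix.mul_apply, Fin.sum_univ_two]

private lemma PXZ_anti : PX * PZ = -(PZ * PX) := by
  ext i j; fin_cases i <;> fin_cases j <;>
    simp [PX, PZ, Matrix.mul_apply, Fin.sum_univ_two]

private lemma PYZ_anti : PY * PZ = -(PZ * PY) := by
  ext i j; fin_cases i <;> fin_cases j <;>
    simp [PY, PZ, Matrix.mul_apply, Fin.sum_univ_two]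

private lemma PX_herm : PXᴴ = PX := by
  ext i j; fin_cases i <;> fin_cases j <;> simp [PX, Matrix.conjTranspose_apply]

private lemma PY_herm : PYᴴ = PY := by
  ext i j; fin_cases i <;> fin_cases j <;> simp [PY, Matrix.conjTranspose_apply]

private lemma PZ_herm : PZᴴ = PZ := by
  ext i j; fin_cases i <;> fin_cases j <;> simp [PZ, Matrix.conjTranspose_apply]

/-! ### tensor lemmas -/

variable {n : ℕ}

lemma tensor_mul (f g : Fin n → Matrix (Fin 2) (Fin 2) ℂ) :
    tensor f * tensor g = tensor (fun i => f i * g i) := by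
  ext x y
  simp only [tensor, Matrix.mul_apply, Matrix.of_apply]
  rw [Finset.prod_univ_sum]
  rw [show (Fintype.piFinset fun _ : Fin n => (Finset.univ : Finset (Fin 2))) = Finset.univ from
    Fintype.piFinset_univ]
  exact Finset.sum_congr rfl fun z _ => (Finset.prod_mul_distrib).symm

lemma tensor_one : tensor (fun _ : Fin n => (1 : Matrix (Fin 2) (Fin 2) ℂ)) = 1 := by
  ext x y
  simp only [tensor, Matrix.of_apply, Matrix.one_apply, Finset.prod_boole]
  simp [funext_iff]

lemma tensor_conjTranspose (f : Fin n → Matrix (Fin 2) (Fin 2) ℂ) :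
    (tensor f)ᴴ = tensor (fun i => (f i)ᴴ) := by
  ext x y
  simp only [tensor, Matrix.conjTranspose_apply, Matrix.of_apply, star_prod]

lemma tensor_sq_one (f : Fin n → Matrix (Fin 2) (Fin 2) ℂ) (hf : ∀ i, f i * f i = 1) :
    tensor f * tensor f = 1 := by
  rw [tensor_mul]
  have : (fun i => f i * f i) = fun _ : Fin n => (1 : Matrix (Fin 2) (Fin 2) ℂ) :=
    funext fun i => hf i
  rw [this, tensor_one]

lemma tensor_anticomm (f g : Fin n → Matrix (Fin 2) (Fin 2) ℂ) (i₀ : Fin n)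
    (h1 : f i₀ * g i₀ = -(g i₀ * f i₀))
    (h2 : ∀ i, i ≠ i₀ → f i * g i = g i * f i) :
    tensor f * tensor g = -(tensor g * tensor f) := by
  rw [tensor_mul, tensor_mul]
  ext x y
  simp only [tensor, Matrix.of_apply, Matrix.neg_apply]
  rw [← Finset.mul_prod_erase _ _ (Finset.mem_univ i₀),
      ← Finset.mul_prod_erase _ (fun i => (g i * f i) (x i) (y i)) (Finset.mem_univ i₀)]
  have e1 : (f i₀ * g i₀) (x i₀) (y i₀) = -((g i₀ * f i₀) (x i₀) (y i₀)) := by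
    rw [h1]; simp
  rw [e1, neg_mul]
  exact congrArg Neg.neg (congrArg₂ HMul.hMul rfl (Finset.prod_congr rfl fun i hi => by
    rw [h2 i (Finset.ne_of_mem_erase hi)]))

/-! ### gamma lemmas -/

lemma gamma_sq (j : Fin (2 * n)) : γ n j * γ n j = 1 := by
  apply tensor_sq_one
  intro i
  by_cases h1 : (i : ℕ) < (j : ℕ) / 2
  · simp [h1, PZ_sq]
  · by_cases h2 : (i : ℕ) = (j : ℕ) / 2
    · by_cases h3 : (j : ℕ) % 2 = 0 <;> simp [h1, h2, h3, PX_sq, PY_sq]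
    · simp [h1, h2]

lemma gamma_anticomm_aux (j k : Fin (2 * n)) (hjk : (j : ℕ) < (k : ℕ)) :
    γ n j * γ n k = -(γ n k * γ n j) := by
  have hj2 : (j : ℕ) / 2 < n := by omega
  apply tensor_anticomm _ _ ⟨(j : ℕ) / 2, hj2⟩
  · -- the anticommuting site
    simp only [lt_irrefl, if_false, if_pos rfl]
    rcases eq_or_lt_of_le (Nat.div_le_div_right (le_of_lt hjk) (c := 2)) with he | hl
    · -- same site : j even, k = j + 1
      have hje : (j : ℕ) % 2 = 0 := by omega
      have hko : (k : ℕ) % 2 = 1 := by omega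
      simp only [he, lt_irrefl, if_false, if_pos rfl, hje, hko]
      norm_num [PXY_anti]
    · -- different sites
      have : ((j : ℕ) / 2) < (k : ℕ) / 2 := hl
      simp only [this, if_true]
      by_cases hje : (j : ℕ) % 2 = 0 <;> simp [hje, PXZ_anti, PYZ_anti]
  · intro i hi
    have hiv : (i : ℕ) ≠ (j : ℕ) / 2 := fun hc => hi (Fin.ext hc)
    by_cases h1 : (i : ℕ) < (j : ℕ) / 2
    · have h1k : (i : ℕ) < (k : ℕ) / 2 := by omega
      simp [h1, h1k]
    · have h2 : ¬ (i : ℕ) < (j:ℕ)/2 := h1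
      simp [h2, hiv]

lemma gamma_anticomm (j k : Fin (2 * n)) (hjk : j ≠ k) :
    γ n j * γ n k = -(γ n k * γ n j) := by
  rcases lt_or_gt_of_ne (fun hc : (j:ℕ) = (k:ℕ) => hjk (Fin.ext hc)) with hlt | hgt
  · exact gamma_anticomm_aux j k hlt
  · rw [gamma_anticomm_aux k j hgt, neg_neg]

lemma gamma_conjTranspose (j : Fin (2 * n)) : (γ n j)ᴴ = γ n j := by
  show (tensor _)ᴴ = tensor _
  rw [tensor_conjTranspose]
  refine congrArg tensor (funext fun i => ?_)
  by_cases h1 : (i : ℕ) < (j : ℕ) / 2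
  · simp [h1, PZ_herm]
  · by_cases h2 : (i : ℕ) = (j : ℕ) / 2
    · by_cases h3 : (j : ℕ) % 2 = 0 <;> simp [h1, h2, h3, PX_herm, PY_herm]
    · simp [h1, h2]

end
end DG
namespace DG
noncomputable section
open Matrix
variable {n : ℕ}

/-- quadratic sum -/
def S2 (n : ℕ) (N : Matrix (Fin (2 * n)) (Fin (2 * n)) ℂ) :
    Matrix (Fin n → Fin 2) (Fin n → Fin 2) ℂ :=
  ∑ j, ∑ k, N j k • (γ n j * γ n k)

/-- linear sum -/
def S1 (n : ℕ) (v : Fin (2 * n) → ℂ) :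
    Matrix (Fin n → Fin 2) (Fin n → Fin 2) ℂ :=
  ∑ j, v j • γ n j

/-- scalar anticommutator -/
def dl (n : ℕ) (j k : Fin (2 * n)) : Matrix (Fin n → Fin 2) (Fin n → Fin 2) ℂ :=
  if j = k then (2 : ℂ) • (1 : Matrix (Fin n → Fin 2) (Fin n → Fin 2) ℂ) else 0

lemma anti (j k : Fin (2 * n)) : γ n j * γ n k + γ n k * γ n j = dl n j k := by
  by_cases h : j = k
  · subst h; rw [gamma_sq]; simp [dl, two_smul]
  · rw [gamma_anticomm j k h]; simp [dl, h]

lemma gmul_eq (j k : Fin (2 * n)) : γ n j * γ n k = dl n j k - γ n k * γ n j :=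
  eq_sub_of_add_eq (anti j k)

lemma dl_mul (j k : Fin (2 * n)) (X : Matrix (Fin n → Fin 2) (Fin n → Fin 2) ℂ) :
    dl n j k * X = if j = k then (2 : ℂ) • X else 0 := by
  by_cases h : j = k <;> simp [dl, h, smul_mul_assoc]

lemma comm_g (j k a : Fin (2 * n)) :
    (γ n j * γ n k) * γ n a - γ n a * (γ n j * γ n k) =
      dl n k a * γ n j - dl n j a * γ n k := by
  have hc1 : γ n j * dl n k a = dl n k a * γ n j := by
    by_cases hh : k = a <;> simp [dl, hh, mul_smul_comm, smul_mul_assoc]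
  rw [mul_assoc, gmul_eq k a, mul_sub, hc1, ← mul_assoc, gmul_eq j a, sub_mul, mul_assoc]
  abel

lemma comm_S2_g (N : Matrix (Fin (2 * n)) (Fin (2 * n)) ℂ) (a : Fin (2 * n)) :
    S2 n N * γ n a - γ n a * S2 n N =
      (2 : ℂ) • S1 n (fun j => N j a) - (2 : ℂ) • S1 n (fun k => N a k) := by
  have e : S2 n N * γ n a - γ n a * S2 n N =
      ∑ j, ∑ k, N j k • ((γ n j * γ n k) * γ n a - γ n a * (γ n j * γ n k)) := by
    simp [S2, Finset.sum_mul, Finset.mul_sum, smul_mul_assoc, mul_smul_comm, smul_sub,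
      Finset.sum_sub_distrib]
  rw [e]
  simp only [comm_g, smul_sub, Finset.sum_sub_distrib]
  congr 1
  · -- ∑ j ∑ k, N j k • (dl k a * γ j) = 2 • S1 (fun j => N j a)
    simp only [dl_mul, smul_ite, smul_zero, Finset.sum_ite_eq', Finset.mem_univ, if_true]
    rw [S1, Finset.smul_sum]
    exact Finset.sum_congr rfl fun j _ => smul_comm _ _ _
  · -- ∑ j ∑ k, N j k • (dl j a * γ k) = 2 • S1 (fun k => N a k)
    rw [Finset.sum_comm]
    simp only [dl_mul, smul_ite, smul_zero, Finset.sum_ite_eq', Finset.mem_univ, if_true]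
    rw [S1, Finset.smul_sum]
    exact Finset.sum_congr rfl fun k _ => smul_comm _ _ _

lemma S1_sum_smul (w : Fin (2 * n) → ℂ) (c : Fin (2 * n) → Fin (2 * n) → ℂ) :
    ∑ a, w a • S1 n (fun j => c j a) = S1 n (fun j => ∑ a, c j a * w a) := by
  simp only [S1, Finset.smul_sum, Finset.sum_smul]
  rw [Finset.sum_comm]
  exact Finset.sum_congr rfl fun j _ => Finset.sum_congr rfl fun a _ => by
    rw [smul_smul, mul_comm]

lemma comm_S2_S1 (N : Matrix (Fin (2 * n)) (Fin (2 * n)) ℂ) (v : Fin (2 * n) → ℂ) :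
    S2 n N * S1 n v - S1 n v * S2 n N =
      (2 : ℂ) • S1 n (N.mulVec v) - (2 : ℂ) • S1 n (Nᵀ.mulVec v) := by
  have e : S2 n N * S1 n v - S1 n v * S2 n N =
      ∑ a, v a • (S2 n N * γ n a - γ n a * S2 n N) := by
    simp [S1, Finset.sum_mul, Finset.mul_sum, smul_mul_assoc, mul_smul_comm, smul_sub,
      Finset.sum_sub_distrib]
  rw [e]
  simp only [comm_S2_g, smul_sub, Finset.sum_sub_distrib]
  congr 1
  · calc ∑ a, v a • ((2:ℂ) • S1 n (fun j => N j a))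
        = (2:ℂ) • ∑ a, v a • S1 n (fun j => N j a) := by
          rw [Finset.smul_sum]; exact Finset.sum_congr rfl fun a _ => smul_comm _ _ _
    _ = (2:ℂ) • S1 n (N.mulVec v) := by
          exact congrArg _ (S1_sum_smul v (fun j a => N j a))
  · calc ∑ a, v a • ((2:ℂ) • S1 n (fun k => N a k))
        = (2:ℂ) • ∑ a, v a • S1 n (fun k => N a k) := by
          rw [Finset.smul_sum]; exact Finset.sum_congr rfl fun a _ => smul_comm _ _ _
    _ = (2:ℂ) • S1 n (Nᵀ.mulVec v) := by
          rw [S1_sum_smul]; rfl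

end
end DG
namespace DG
noncomputable section
open Matrix
variable {n : ℕ}

lemma S2_add (N P : Matrix (Fin (2 * n)) (Fin (2 * n)) ℂ) :
    S2 n (N + P) = S2 n N + S2 n P := by
  simp [S2, add_smul, Finset.sum_add_distrib]

lemma S2_sub (N P : Matrix (Fin (2 * n)) (Fin (2 * n)) ℂ) :
    S2 n (N - P) = S2 n N - S2 n P := by
  simp [S2, sub_smul, Finset.sum_sub_distrib]

lemma S2_smul (c : ℂ) (N : Matrix (Fin (2 * n)) (Fin (2 * n)) ℂ) :
    S2 n (c • N) = c • S2 n N := by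
  simp [S2, Finset.smul_sum, smul_smul]

lemma S1_add (v w : Fin (2 * n) → ℂ) : S1 n (v + w) = S1 n v + S1 n w := by
  simp [S1, add_smul, Finset.sum_add_distrib]

lemma S1_sub (v w : Fin (2 * n) → ℂ) : S1 n (v - w) = S1 n v - S1 n w := by
  simp [S1, sub_smul, Finset.sum_sub_distrib]

lemma S1_smul (c : ℂ) (v : Fin (2 * n) → ℂ) : S1 n (c • v) = c • S1 n v := by
  simp [S1, Finset.smul_sum, smul_smul]

lemma mul_S1_S1 (w v : Fin (2 * n) → ℂ) :
    S1 n w * S1 n v = S2 n (Matrix.of fun j k => w j * v k) := by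
  simp only [S1, S2, Finset.sum_mul, Finset.mul_sum, Matrix.of_apply]
  rw [Finset.sum_comm]
  exact Finset.sum_congr rfl fun j _ => Finset.sum_congr rfl fun k _ => by
    rw [smul_mul_assoc, mul_smul_comm, smul_smul]

private lemma commutator_mul (X A B : Matrix (Fin n → Fin 2) (Fin n → Fin 2) ℂ) :
    X * (A * B) - (A * B) * X = (X * A - A * X) * B + A * (X * B - B * X) := by
  noncomm_ring

lemma comm_X_S2 (X : Matrix (Fin n → Fin 2) (Fin n → Fin 2) ℂ)
    (P : Matrix (Fin (2 * n)) (Fin (2 * n)) ℂ) :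
    X * S2 n P - S2 n P * X =
      ∑ a, ∑ b, P a b • (X * (γ n a * γ n b) - (γ n a * γ n b) * X) := by
  simp [S2, Finset.mul_sum, Finset.sum_mul, mul_smul_comm, smul_mul_assoc, smul_sub,
    Finset.sum_sub_distrib]

lemma S1_mul_g (w : Fin (2 * n) → ℂ) (b : Fin (2 * n)) :
    S1 n w * γ n b = ∑ j, w j • (γ n j * γ n b) := by
  simp [S1, Finset.sum_mul, smul_mul_assoc]

lemma g_mul_S1 (w : Fin (2 * n) → ℂ) (a : Fin (2 * n)) :
    γ n a * S1 n w = ∑ j, w j • (γ n a * γ n j) := by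
  simp [S1, Finset.mul_sum, mul_smul_comm]

lemma two_smul_S2_mul (A B : Matrix (Fin (2 * n)) (Fin (2 * n)) ℂ) :
    (2 : ℂ) • S2 n (A * B) = ∑ j, ∑ k, ∑ a, (2 * (A j a * B a k)) • (γ n j * γ n k) := by
  rw [S2, Finset.smul_sum]
  refine Finset.sum_congr rfl fun j _ => ?_
  rw [Finset.smul_sum]
  refine Finset.sum_congr rfl fun k _ => ?_
  rw [Matrix.mul_apply, smul_smul, Finset.mul_sum, Finset.sum_smul]

lemma comm_S2_S2 (N P : Matrix (Fin (2 * n)) (Fin (2 * n)) ℂ) :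
    S2 n N * S2 n P - S2 n P * S2 n N =
      ((2 : ℂ) • S2 n (N * P) - (2 : ℂ) • S2 n (Nᵀ * P)) +
        ((2 : ℂ) • S2 n (P * Nᵀ) - (2 : ℂ) • S2 n (P * N)) := by
  rw [comm_X_S2]
  have inner : ∀ a b : Fin (2 * n),
      S2 n N * (γ n a * γ n b) - (γ n a * γ n b) * S2 n N =
        (((2:ℂ) • S1 n (fun j => N j a) - (2:ℂ) • S1 n (fun k => N a k)) * γ n b)
          + γ n a * ((2:ℂ) • S1 n (fun j => N j b) - (2:ℂ) • S1 n (fun k => N b k)) := by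
    intro a b
    rw [commutator_mul (S2 n N) (γ n a) (γ n b), comm_S2_g, comm_S2_g]
  simp only [inner]
  -- expand
  simp only [sub_mul, mul_sub, smul_mul_assoc, mul_smul_comm, S1_mul_g, g_mul_S1,
    Finset.smul_sum, smul_smul, smul_sub, Finset.sum_add_distrib, Finset.sum_sub_distrib,
    smul_add]
  congr 1
  · congr 1
    · -- t1
      rw [two_smul_S2_mul]
      rw [Finset.sum_comm]
      rw [show ∀ f : Fin (2*n) → Fin (2*n) → Fin (2*n) → Matrix (Fin n → Fin 2) (Fin n → Fin 2) ℂ,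
        (∑ b, ∑ a, ∑ j, f b a j) = ∑ b, ∑ j, ∑ a, f b a j from
        fun f => Finset.sum_congr rfl fun b _ => Finset.sum_comm]
      rw [Finset.sum_comm]
      exact Finset.sum_congr rfl fun j _ => Finset.sum_congr rfl fun b _ =>
        Finset.sum_congr rfl fun a _ => congrArg (· • _) (by ring)
    · -- t2
      rw [two_smul_S2_mul]
      rw [Finset.sum_comm]
      rw [show ∀ f : Fin (2*n) → Fin (2*n) → Fin (2*n) → Matrix (Fin n → Fin 2) (Fin n → Fin 2) ℂ,
        (∑ b, ∑ a, ∑ j, f b a j) = ∑ b, ∑ j, ∑ a, f b a j from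
        fun f => Finset.sum_congr rfl fun b _ => Finset.sum_comm]
      rw [Finset.sum_comm]
      exact Finset.sum_congr rfl fun j _ => Finset.sum_congr rfl fun b _ =>
        Finset.sum_congr rfl fun a _ => congrArg (· • _) (by
          rw [Matrix.transpose_apply]; ring)
  · congr 1
    · -- t3
      rw [two_smul_S2_mul]
      exact Finset.sum_congr rfl fun a _ => Finset.sum_comm.trans
        (Finset.sum_congr rfl fun j _ => Finset.sum_congr rfl fun b _ =>
          congrArg (· • _) (by rw [Matrix.transpose_apply]; ring))
    · -- t4
      rw [two_smul_S2_mul]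
      exact Finset.sum_congr rfl fun a _ => Finset.sum_comm.trans
        (Finset.sum_congr rfl fun j _ => Finset.sum_congr rfl fun b _ =>
          congrArg (· • _) (by ring))

end
end DG
namespace DG
noncomputable section
open Matrix
variable {n : ℕ}

lemma comm_quad (H m : Matrix (Fin (2 * n)) (Fin (2 * n)) ℂ) (D w : Fin (2 * n) → ℂ) :
    ((1/2 : ℂ) • S2 n H + Complex.I • S1 n D) * ((1/2 : ℂ) • S2 n m + S1 n w)
      - ((1/2 : ℂ) • S2 n m + S1 n w) * ((1/2 : ℂ) • S2 n H + Complex.I • S1 n D)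
    = (1/2 : ℂ) • S2 n (H * m - Hᵀ * m + m * Hᵀ - m * H
        + ((2 : ℂ) * Complex.I) •
          (Matrix.of (fun j k => D j * w k) - Matrix.of (fun j k => w j * D k)))
      + S1 n (H.mulVec w - Hᵀ.mulVec w
          - Complex.I • m.mulVec D + Complex.I • mᵀ.mulVec D) := by
  have c2 := sub_eq_iff_eq_add.mp (comm_S2_S2 H m)
  have c1 := sub_eq_iff_eq_add.mp (comm_S2_S1 H w)
  have c1' := sub_eq_iff_eq_add.mp (comm_S2_S1 m D)
  have e1 := mul_S1_S1 D w
  have e2 := mul_S1_S1 w D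
  simp only [add_mul, mul_add, smul_mul_assoc, mul_smul_comm, smul_smul,
    S2_add, S2_sub, S2_smul, S1_add, S1_sub, S1_smul, smul_sub, smul_add]
  rw [c2, c1, c1', e1, e2]
  module

end
end DG
namespace DG
noncomputable section
open Matrix
variable {n : ℕ}

/-- The complexified generator `2·[[h,−d],[dᵀ,0]]`. -/
def E2 (h : Matrix (Fin (2 * n)) (Fin (2 * n)) ℝ) (d : Fin (2 * n) → ℝ) :
    Matrix (Fin (2 * n + 1)) (Fin (2 * n + 1)) ℂ :=
  ((2 : ℝ) • extBlockR h d).map (Complex.ofReal)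

/-- top-left/last-column extraction map. -/
def Phi (n : ℕ) (B : Matrix (Fin (2 * n + 1)) (Fin (2 * n + 1)) ℂ) :
    Matrix (Fin n → Fin 2) (Fin n → Fin 2) ℂ :=
  (1/2 : ℂ) • S2 n (Matrix.of fun j k => B j.castSucc k.castSucc)
    + S1 n (fun j => -Complex.I * B j.castSucc (Fin.last (2 * n)))

section entries
variable (h : Matrix (Fin (2 * n)) (Fin (2 * n)) ℝ) (d : Fin (2 * n) → ℝ)
variable (M : Matrix (Fin (2 * n)) (Fin (2 * n)) ℂ) (v : Fin (2 * n) → ℂ)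

lemma E2_cc (j c : Fin (2 * n)) : E2 h d j.castSucc c.castSucc = 2 * (h j c : ℂ) := by
  simp [E2, extBlockR, Matrix.map_apply, Fin.is_lt]

lemma E2_cl (j : Fin (2 * n)) : E2 h d j.castSucc (Fin.last (2 * n)) = -(2 * (d j : ℂ)) := by
  simp [E2, extBlockR, Matrix.map_apply, Fin.is_lt]

lemma E2_lc (c : Fin (2 * n)) : E2 h d (Fin.last (2 * n)) c.castSucc = 2 * (d c : ℂ) := by
  simp [E2, extBlockR, Matrix.map_apply, Fin.is_lt]

lemma E2_ll : E2 h d (Fin.last (2 * n)) (Fin.last (2 * n)) = 0 := by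
  simp [E2, extBlockR, Matrix.map_apply]

lemma XB_cc (j k : Fin (2 * n)) : extBlock M v j.castSucc k.castSucc = M j k := by
  simp [extBlock, Fin.is_lt]

lemma XB_cl (j : Fin (2 * n)) : extBlock M v j.castSucc (Fin.last (2 * n)) = Complex.I * v j := by
  simp [extBlock, Fin.is_lt]

lemma XB_lc (k : Fin (2 * n)) :
    extBlock M v (Fin.last (2 * n)) k.castSucc = -(Complex.I * v k) := by
  simp [extBlock, Fin.is_lt]

lemma XB_ll : extBlock M v (Fin.last (2 * n)) (Fin.last (2 * n)) = 0 := by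
  simp [extBlock]

lemma Phi_extBlock : Phi n (extBlock M v) = quadPolyC n M v := by
  have hM : (Matrix.of fun j k => extBlock M v j.castSucc k.castSucc) = M := by
    ext j k; simp [XB_cc]
  have hv : (fun j => -Complex.I * extBlock M v j.castSucc (Fin.last (2 * n))) = v := by
    funext j
    rw [XB_cl, ← mul_assoc, neg_mul, Complex.I_mul_I, neg_neg, one_mul]
  rw [Phi, hM, hv]; rfl

lemma extBlock_antisym (hM : Mᵀ = -M) : (extBlock M v)ᵀ = -(extBlock M v) := by
  have hM' : ∀ x y, M y x = -M x y := fun x y => by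
    have := congrFun (congrFun hM x) y
    simpa [Matrix.transpose_apply] using this
  ext a b
  induction a using Fin.lastCases with
  | last => induction b using Fin.lastCases with
    | last => simp [XB_ll]
    | cast j => simp [XB_cl, XB_lc]
  | cast j => induction b using Fin.lastCases with
    | last => simp [XB_cl, XB_lc]
    | cast k => simp [XB_cc, hM' j k]

lemma E2_antisym (hh : hᵀ = -h) : (E2 h d)ᵀ = -(E2 h d) := by
  have hh' : ∀ x y, h y x = -h x y := fun x y => by
    have := congrFun (congrFun hh x) y
    simpa [Matrix.transpose_apply] using this
  ext a b
  induction a using Fin.lastCases with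
  | last => induction b using Fin.lastCases with
    | last => simp [E2_ll]
    | cast j => simp [E2_cl, E2_lc]
  | cast j => induction b using Fin.lastCases with
    | last => simp [E2_cl, E2_lc]
    | cast k => simp [E2_cc, hh' j k]

end entries

end
end DG
namespace DG
noncomputable section
open Matrix
variable {n : ℕ}

lemma key (h : Matrix (Fin (2 * n)) (Fin (2 * n)) ℝ) (d : Fin (2 * n) → ℝ) (hh : hᵀ = -h)
    (B : Matrix (Fin (2 * n + 1)) (Fin (2 * n + 1)) ℂ) (hB : Bᵀ = -B) :
    quadArg n h d * Phi n B - Phi n B * quadArg n h d = Phi n (E2 h d * B - B * E2 h d) := by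
  have hh' : ∀ x y, h y x = -h x y := fun x y => by
    have := congrFun (congrFun hh x) y
    simpa [Matrix.transpose_apply] using this
  have hB' : ∀ x y, B y x = -B x y := fun x y => by
    have := congrFun (congrFun hB x) y
    simpa [Matrix.transpose_apply] using this
  have hBll : B (Fin.last (2 * n)) (Fin.last (2 * n)) = 0 := by
    have hx := hB' (Fin.last (2 * n)) (Fin.last (2 * n))
    have h2 : (2 : ℂ) * B (Fin.last (2 * n)) (Fin.last (2 * n)) = 0 := by linear_combination hx
    exact (mul_eq_zero.mp h2).resolve_left two_ne_zero
  have hq : quadArg n h d =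
      (1/2 : ℂ) • S2 n (h.map Complex.ofReal) + Complex.I • S1 n (fun j => (d j : ℂ)) := rfl
  have hPhi : Phi n B =
      (1/2 : ℂ) • S2 n (Matrix.of fun j k => B j.castSucc k.castSucc)
        + S1 n (fun j => -Complex.I * B j.castSucc (Fin.last (2 * n))) := rfl
  rw [hq, hPhi, comm_quad, Phi]
  congr 1
  · refine congrArg (fun Z => (1/2 : ℂ) • Z) (congrArg (S2 n) ?_)
    ext j k
    simp only [Matrix.sub_apply, Matrix.add_apply, Matrix.smul_apply, Matrix.of_apply,
      Matrix.mul_apply, Matrix.transpose_apply, Matrix.map_apply, smul_eq_mul,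
      Fin.sum_univ_castSucc (n := 2 * n), E2_cc, E2_cl, E2_lc, E2_ll, hBll]
    have e1 : ∑ x : Fin (2 * n), ((h x j : ℝ) : ℂ) * B x.castSucc k.castSucc
        = -∑ x : Fin (2 * n), ((h j x : ℝ) : ℂ) * B x.castSucc k.castSucc := by
      rw [← Finset.sum_neg_distrib]
      exact Finset.sum_congr rfl fun x _ => by rw [hh' j x]; push_cast; ring
    have e2 : ∑ x : Fin (2 * n), B j.castSucc x.castSucc * ((h k x : ℝ) : ℂ)
        = -∑ x : Fin (2 * n), B j.castSucc x.castSucc * ((h x k : ℝ) : ℂ) := by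
      rw [← Finset.sum_neg_distrib]
      exact Finset.sum_congr rfl fun x _ => by rw [hh' x k]; push_cast; ring
    have e3 : ∑ x : Fin (2 * n), 2 * ((h j x : ℝ) : ℂ) * B x.castSucc k.castSucc
        = 2 * ∑ x : Fin (2 * n), ((h j x : ℝ) : ℂ) * B x.castSucc k.castSucc := by
      rw [Finset.mul_sum]
      exact Finset.sum_congr rfl fun x _ => by ring
    have e4 : ∑ x : Fin (2 * n), B j.castSucc x.castSucc * (2 * ((h x k : ℝ) : ℂ))
        = 2 * ∑ x : Fin (2 * n), B j.castSucc x.castSucc * ((h x k : ℝ) : ℂ) := by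
      rw [Finset.mul_sum]
      exact Finset.sum_congr rfl fun x _ => by ring
    have e5 : B (Fin.last (2 * n)) k.castSucc = -B k.castSucc (Fin.last (2 * n)) := hB' _ _
    rw [e1, e2, e3, e4, e5]
    linear_combination (2 * B j.castSucc (Fin.last (2 * n)) * ((d k : ℝ) : ℂ)
      - 2 * ((d j : ℝ) : ℂ) * B k.castSucc (Fin.last (2 * n))) * Complex.I_sq
  · refine congrArg (S1 n) ?_
    funext j
    simp only [Matrix.mulVec, dotProduct, Pi.add_apply, Pi.sub_apply, Pi.smul_apply,
      Matrix.sub_apply, Matrix.of_apply, Matrix.mul_apply, Matrix.transpose_apply,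
      Matrix.map_apply, smul_eq_mul,
      Fin.sum_univ_castSucc (n := 2 * n), E2_cc, E2_cl, E2_lc, E2_ll, hBll]
    have b1 : ∑ x : Fin (2 * n), ((h j x : ℝ) : ℂ) * (-Complex.I * B x.castSucc (Fin.last (2 * n)))
        = -Complex.I * ∑ x : Fin (2 * n), ((h j x : ℝ) : ℂ) * B x.castSucc (Fin.last (2 * n)) := by
      rw [Finset.mul_sum]
      exact Finset.sum_congr rfl fun x _ => by ring
    have b2 : ∑ x : Fin (2 * n), ((h x j : ℝ) : ℂ) * (-Complex.I * B x.castSucc (Fin.last (2 * n)))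
        = Complex.I * ∑ x : Fin (2 * n), ((h j x : ℝ) : ℂ) * B x.castSucc (Fin.last (2 * n)) := by
      rw [Finset.mul_sum]
      exact Finset.sum_congr rfl fun x _ => by rw [hh' j x]; push_cast; ring
    have b3 : ∑ x : Fin (2 * n), B x.castSucc j.castSucc * ((d x : ℝ) : ℂ)
        = -∑ x : Fin (2 * n), B j.castSucc x.castSucc * ((d x : ℝ) : ℂ) := by
      rw [← Finset.sum_neg_distrib]
      exact Finset.sum_congr rfl fun x _ => by rw [hB' j.castSucc x.castSucc]; ring
    have b4 : ∑ x : Fin (2 * n), 2 * ((h j x : ℝ) : ℂ) * B x.castSucc (Fin.last (2 * n))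
        = 2 * ∑ x : Fin (2 * n), ((h j x : ℝ) : ℂ) * B x.castSucc (Fin.last (2 * n)) := by
      rw [Finset.mul_sum]
      exact Finset.sum_congr rfl fun x _ => by ring
    have b5 : ∑ x : Fin (2 * n), B j.castSucc x.castSucc * -(2 * ((d x : ℝ) : ℂ))
        = -2 * ∑ x : Fin (2 * n), B j.castSucc x.castSucc * ((d x : ℝ) : ℂ) := by
      rw [Finset.mul_sum]
      exact Finset.sum_congr rfl fun x _ => by ring
    rw [b1, b2, b3, b4, b5]
    ring

end
end DG
namespace DG
noncomputable section
open Matrix NormedSpace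

variable {q : Type*} [Fintype q] [DecidableEq q]

/-- iterated commutator -/
def adIter (T X : Matrix q q ℂ) : ℕ → Matrix q q ℂ
  | 0 => X
  | (k + 1) => T * adIter T X k - adIter T X k * T

private lemma exp_stuff (T X : Matrix q q ℂ) :
    (Summable fun k : ℕ => ((k.factorial : ℂ))⁻¹ • adIter T X k) ∧
    exp T * X * exp (-T) = ∑' k : ℕ, ((k.factorial : ℂ))⁻¹ • adIter T X k := by
  letI : SeminormedRing (Matrix q q ℂ) := Matrix.linftyOpSemiNormedRing
  letI : NormedRing (Matrix q q ℂ) := Matrix.linftyOpNormedRing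
  letI : NormedAlgebra ℂ (Matrix q q ℂ) := Matrix.linftyOpNormedAlgebra
  letI : NormedAlgebra ℚ (Matrix q q ℂ) := Matrix.linftyOpNormedAlgebra
  let Ψ := Module.End.toContinuousLinearMap (Matrix q q ℂ) (𝕜 := ℂ)
  let L := Ψ (LinearMap.mulLeft ℂ T)
  let R := Ψ (LinearMap.mulRight ℂ (-T))
  have hLR : Commute L R := by
    apply ContinuousLinearMap.ext
    intro Y
    show T * (Y * -T) = (T * Y) * -T
    rw [mul_assoc]
  have pow_apply : ∀ (k : ℕ), ((L + R) ^ k) X = adIter T X k := by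
    intro k
    induction k with
    | zero => rfl
    | succ k ih =>
      rw [pow_succ']
      have e : ((L + R) * (L + R) ^ k) X = (L + R) (((L + R) ^ k) X) := rfl
      rw [e, ih]
      show T * adIter T X k + adIter T X k * -T = adIter T X (k + 1)
      rw [show adIter T X (k + 1) = T * adIter T X k - adIter T X k * T from rfl]
      rw [mul_neg]
      abel
  have hsum : Summable fun k : ℕ => ((k.factorial : ℂ))⁻¹ • adIter T X k := by
    have h1 := expSeries_summable' (𝕂 := ℂ) (L + R)
    have h2 := h1.map (ContinuousLinearMap.apply ℂ (Matrix q q ℂ) X)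
      (ContinuousLinearMap.apply ℂ (Matrix q q ℂ) X).continuous
    refine h2.congr fun k => ?_
    show (ContinuousLinearMap.apply ℂ (Matrix q q ℂ) X) _ = _
    rw [ContinuousLinearMap.apply_apply, ContinuousLinearMap.smul_apply, pow_apply]
  refine ⟨hsum, ?_⟩
  letI i1 : NormedRing (Matrix q q ℂ →L[ℂ] Matrix q q ℂ) := ContinuousLinearMap.toNormedRing
  letI i2 : NormedAlgebra ℂ (Matrix q q ℂ →L[ℂ] Matrix q q ℂ) := ContinuousLinearMap.toNormedAlgebra
  letI i3 : NormedAlgebra ℚ (Matrix q q ℂ →L[ℂ] Matrix q q ℂ) := .restrictScalars ℚ ℂ _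
  haveI i4 : CompleteSpace (Matrix q q ℂ →L[ℂ] Matrix q q ℂ) := FiniteDimensional.complete ℂ _
  have hadd : exp (L + R) = exp L * exp R := @exp_add_of_commute _ i1 i3 i4 _ _ hLR
  have hexpL : exp L = Ψ (LinearMap.mulLeft ℂ (exp T)) := by
    have hcont : Continuous (Ψ.toAlgHom.comp (Algebra.lmul ℂ (Matrix q q ℂ))) :=
      LinearMap.continuous_of_finiteDimensional
        ((Ψ.toAlgHom.comp (Algebra.lmul ℂ (Matrix q q ℂ))).toLinearMap)
    exact (map_exp (Ψ.toAlgHom.comp (Algebra.lmul ℂ (Matrix q q ℂ))) hcont T).symm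
  have hexpR : exp R X = X * exp (-T) := by
    have h1 : exp R X = ∑' k : ℕ, ((k.factorial : ℂ))⁻¹ • (X * (-T) ^ k) := by
      rw [exp_eq_tsum ℂ]
      have happ := ContinuousLinearMap.map_tsum (ContinuousLinearMap.apply ℂ (Matrix q q ℂ) X)
        (expSeries_summable' (𝕂 := ℂ) R)
      rw [ContinuousLinearMap.apply_apply] at happ
      rw [happ]
      refine tsum_congr fun k => ?_
      rw [ContinuousLinearMap.apply_apply, ContinuousLinearMap.smul_apply]
      congr 1
      have e : R ^ k = Ψ (LinearMap.mulRight ℂ (-T) ^ k) := (map_pow Ψ _ k).symm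
      rw [e, LinearMap.pow_mulRight]
      rfl
    have h2 : X * exp (-T) = ∑' k : ℕ, ((k.factorial : ℂ))⁻¹ • (X * (-T) ^ k) := by
      rw [exp_eq_tsum ℂ]
      have hm := ContinuousLinearMap.map_tsum (Ψ (LinearMap.mulLeft ℂ X))
        (expSeries_summable' (𝕂 := ℂ) (-T))
      calc X * (∑' k : ℕ, ((k.factorial : ℂ))⁻¹ • (-T) ^ k)
          = Ψ (LinearMap.mulLeft ℂ X) (∑' k : ℕ, ((k.factorial : ℂ))⁻¹ • (-T) ^ k) := rfl
        _ = ∑' k : ℕ, Ψ (LinearMap.mulLeft ℂ X) (((k.factorial : ℂ))⁻¹ • (-T) ^ k) := hm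
        _ = ∑' k : ℕ, ((k.factorial : ℂ))⁻¹ • (X * (-T) ^ k) := tsum_congr fun k => by
            rw [_root_.map_smul]; rfl
    rw [h1, h2]
  have main : exp (L + R) X = ∑' k : ℕ, ((k.factorial : ℂ))⁻¹ • adIter T X k := by
    rw [exp_eq_tsum ℂ]
    have happ := ContinuousLinearMap.map_tsum (ContinuousLinearMap.apply ℂ (Matrix q q ℂ) X)
      (expSeries_summable' (𝕂 := ℂ) (L + R))
    rw [ContinuousLinearMap.apply_apply] at happ
    rw [happ]
    refine tsum_congr fun k => ?_
    rw [ContinuousLinearMap.apply_apply, ContinuousLinearMap.smul_apply, pow_apply]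
  calc exp T * X * exp (-T) = exp T * (X * exp (-T)) := mul_assoc _ _ _
    _ = exp L (exp R X) := by rw [hexpR, hexpL]; rfl
    _ = exp (L + R) X := by rw [hadd]; rfl
    _ = ∑' k : ℕ, ((k.factorial : ℂ))⁻¹ • adIter T X k := main

lemma summable_adIter (T X : Matrix q q ℂ) :
    Summable fun k : ℕ => ((k.factorial : ℂ))⁻¹ • adIter T X k := (exp_stuff T X).1

lemma exp_conj_adIter (T X : Matrix q q ℂ) :
    exp T * X * exp (-T) = ∑' k : ℕ, ((k.factorial : ℂ))⁻¹ • adIter T X k :=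
  (exp_stuff T X).2

end
end DG
namespace DG
noncomputable section
open Matrix NormedSpace
variable {n : ℕ}

lemma S2_neg (N : Matrix (Fin (2 * n)) (Fin (2 * n)) ℂ) : S2 n (-N) = -S2 n N := by
  simp [S2, neg_smul, Finset.sum_neg_distrib]

lemma S2_conjTranspose (N : Matrix (Fin (2 * n)) (Fin (2 * n)) ℂ) :
    (S2 n N)ᴴ = S2 n (Matrix.of fun j k => star (N k j)) := by
  unfold S2
  simp only [Matrix.conjTranspose_sum, Matrix.conjTranspose_smul, Matrix.conjTranspose_mul,
    gamma_conjTranspose]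
  rw [Finset.sum_comm]
  simp [Matrix.of_apply]

lemma S1_conjTranspose (v : Fin (2 * n) → ℂ) :
    (S1 n v)ᴴ = S1 n (fun j => star (v j)) := by
  unfold S1
  simp only [Matrix.conjTranspose_sum, Matrix.conjTranspose_smul, gamma_conjTranspose]

lemma quadArg_conjTranspose (h : Matrix (Fin (2 * n)) (Fin (2 * n)) ℝ) (d : Fin (2 * n) → ℝ)
    (hh : hᵀ = -h) : (quadArg n h d)ᴴ = -quadArg n h d := by
  have hh' : ∀ x y, h y x = -h x y := fun x y => by
    have := congrFun (congrFun hh x) y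
    simpa [Matrix.transpose_apply] using this
  have hq : quadArg n h d =
      (1/2 : ℂ) • S2 n (h.map Complex.ofReal) + Complex.I • S1 n (fun j => (d j : ℂ)) := rfl
  rw [hq]
  rw [Matrix.conjTranspose_add, Matrix.conjTranspose_smul, Matrix.conjTranspose_smul,
    S2_conjTranspose, S1_conjTranspose]
  have e1 : (Matrix.of fun j k => star ((h.map Complex.ofReal) k j)) = -(h.map Complex.ofReal) := by
    ext j k
    simp [Matrix.map_apply, Complex.conj_ofReal, hh' j k]
  have e2 : (fun j => star ((d j : ℂ))) = fun j => (d j : ℂ) := by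
    funext j; exact Complex.conj_ofReal _
  rw [e1, e2, S2_neg]
  simp only [RCLike.star_def, map_div₀, _root_.map_one, map_ofNat, Complex.conj_I]
  module

/-- `Phi` as a linear map. -/
def PhiLin (n : ℕ) :
    Matrix (Fin (2 * n + 1)) (Fin (2 * n + 1)) ℂ →ₗ[ℂ]
      Matrix (Fin n → Fin 2) (Fin n → Fin 2) ℂ where
  toFun := Phi n
  map_add' B C := by
    show Phi n (B + C) = Phi n B + Phi n C
    unfold Phi
    have h1 : (Matrix.of fun (j k : Fin (2 * n)) => (B + C) j.castSucc k.castSucc)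
        = (Matrix.of fun (j k : Fin (2 * n)) => B j.castSucc k.castSucc)
          + (Matrix.of fun (j k : Fin (2 * n)) => C j.castSucc k.castSucc) := rfl
    have h2 : (fun (j : Fin (2 * n)) => -Complex.I * (B + C) j.castSucc (Fin.last (2 * n)))
        = (fun (j : Fin (2 * n)) => -Complex.I * B j.castSucc (Fin.last (2 * n)))
          + (fun (j : Fin (2 * n)) => -Complex.I * C j.castSucc (Fin.last (2 * n))) := by
      funext j
      show -Complex.I * (B _ _ + C _ _) = _
      show _ = -Complex.I * B _ _ + -Complex.I * C _ _
      ring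
    rw [h1, h2, S2_add, S1_add]
    module
  map_smul' c B := by
    show Phi n (c • B) = c • Phi n B
    unfold Phi
    have h1 : (Matrix.of fun (j k : Fin (2 * n)) => (c • B) j.castSucc k.castSucc)
        = c • (Matrix.of fun (j k : Fin (2 * n)) => B j.castSucc k.castSucc) := rfl
    have h2 : (fun (j : Fin (2 * n)) => -Complex.I * (c • B) j.castSucc (Fin.last (2 * n)))
        = c • (fun (j : Fin (2 * n)) => -Complex.I * B j.castSucc (Fin.last (2 * n))) := by
      funext j
      show -Complex.I * (c * B _ _) = c * (-Complex.I * B _ _)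
      ring
    rw [h1, h2, S2_smul, S1_smul]
    module

/-- `Phi` as a continuous linear map. -/
def PhiC (n : ℕ) :
    Matrix (Fin (2 * n + 1)) (Fin (2 * n + 1)) ℂ →L[ℂ]
      Matrix (Fin n → Fin 2) (Fin n → Fin 2) ℂ :=
  ⟨PhiLin n, (PhiLin n).continuous_of_finiteDimensional⟩

lemma adIter_lemma (h : Matrix (Fin (2 * n)) (Fin (2 * n)) ℝ) (d : Fin (2 * n) → ℝ)
    (hh : hᵀ = -h) (B₀ : Matrix (Fin (2 * n + 1)) (Fin (2 * n + 1)) ℂ) (hB₀ : B₀ᵀ = -B₀) :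
    ∀ k : ℕ, ((adIter (E2 h d) B₀ k)ᵀ = -(adIter (E2 h d) B₀ k)) ∧
      adIter (quadArg n h d) (Phi n B₀) k = Phi n (adIter (E2 h d) B₀ k) := by
  intro k
  induction k with
  | zero => exact ⟨hB₀, rfl⟩
  | succ k ih =>
    constructor
    · show (E2 h d * adIter (E2 h d) B₀ k - adIter (E2 h d) B₀ k * E2 h d)ᵀ = _
      rw [Matrix.transpose_sub, Matrix.transpose_mul, Matrix.transpose_mul, ih.1,
        E2_antisym h d hh]
      show -(adIter (E2 h d) B₀ k) * -(E2 h d) - -(E2 h d) * -(adIter (E2 h d) B₀ k) = _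
      rw [neg_mul_neg, neg_mul_neg]
      rw [show adIter (E2 h d) B₀ (k + 1)
          = E2 h d * adIter (E2 h d) B₀ k - adIter (E2 h d) B₀ k * E2 h d from rfl]
      abel
    · show quadArg n h d * adIter (quadArg n h d) (Phi n B₀) k
          - adIter (quadArg n h d) (Phi n B₀) k * quadArg n h d = _
      rw [ih.2, key h d hh _ ih.1]
      rfl

end
end DG
namespace DG
noncomputable section
open Matrix NormedSpace
variable {n : ℕ}

lemma Rmat_map (h : Matrix (Fin (2 * n)) (Fin (2 * n)) ℝ) (d : Fin (2 * n) → ℝ) :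
    (Rmat n h d).map Complex.ofReal = exp (E2 h d) := by
  letI : SeminormedRing (Matrix (Fin (2 * n + 1)) (Fin (2 * n + 1)) ℝ) :=
    Matrix.linftyOpSemiNormedRing
  letI : NormedRing (Matrix (Fin (2 * n + 1)) (Fin (2 * n + 1)) ℝ) := Matrix.linftyOpNormedRing
  letI : NormedAlgebra ℝ (Matrix (Fin (2 * n + 1)) (Fin (2 * n + 1)) ℝ) :=
    Matrix.linftyOpNormedAlgebra
  letI : NormedAlgebra ℚ (Matrix (Fin (2 * n + 1)) (Fin (2 * n + 1)) ℝ) :=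
    Matrix.linftyOpNormedAlgebra
  letI : SeminormedRing (Matrix (Fin (2 * n + 1)) (Fin (2 * n + 1)) ℂ) :=
    Matrix.linftyOpSemiNormedRing
  letI : NormedRing (Matrix (Fin (2 * n + 1)) (Fin (2 * n + 1)) ℂ) := Matrix.linftyOpNormedRing
  letI : NormedAlgebra ℝ (Matrix (Fin (2 * n + 1)) (Fin (2 * n + 1)) ℂ) :=
    Matrix.linftyOpNormedAlgebra
  letI : NormedAlgebra ℚ (Matrix (Fin (2 * n + 1)) (Fin (2 * n + 1)) ℂ) :=
    Matrix.linftyOpNormedAlgebra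
  have hf : Continuous (Complex.ofRealHom.mapMatrix :
      Matrix (Fin (2 * n + 1)) (Fin (2 * n + 1)) ℝ →+* Matrix (Fin (2 * n + 1)) (Fin (2 * n + 1)) ℂ) := by
    apply continuous_matrix
    intro i j
    exact Complex.continuous_ofReal.comp ((continuous_apply j).comp (continuous_apply i))
  have h1 := map_exp (Complex.ofRealHom.mapMatrix :
      Matrix (Fin (2 * n + 1)) (Fin (2 * n + 1)) ℝ →+* Matrix (Fin (2 * n + 1)) (Fin (2 * n + 1)) ℂ)
      hf ((2 : ℝ) • extBlockR h d)
  have h2 : (Rmat n h d).map Complex.ofReal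
      = Complex.ofRealHom.mapMatrix (exp ((2 : ℝ) • extBlockR h d)) := rfl
  rw [h2]
  refine h1.trans ?_
  have h3 : (Complex.ofRealHom.mapMatrix ((2 : ℝ) • extBlockR h d) :
      Matrix (Fin (2 * n + 1)) (Fin (2 * n + 1)) ℂ) = E2 h d := rfl
  rw [h3]
  rfl

end
end DG
open DG in
/-- conjugation of a quadratic polynomial `O = (1/2)Σ M_{jk}γ_jγ_k + Σ v_jγ_j`
by a displaced Gaussian unitary `U` yields the quadratic polynomial whose data `(A, u)`
is obtained from `(M, v)` by conjugating the extended matrix by the rotation `R(h,d)`. -/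
theorem statement3 (n : ℕ) (hn : 1 ≤ n)
    (h : Matrix (Fin (2 * n)) (Fin (2 * n)) ℝ) (d : Fin (2 * n) → ℝ) (hh : hᵀ = -h)
    (M : Matrix (Fin (2 * n)) (Fin (2 * n)) ℂ) (v : Fin (2 * n) → ℂ) (hM : Mᵀ = -M)
    (A : Matrix (Fin (2 * n)) (Fin (2 * n)) ℂ) (u : Fin (2 * n) → ℂ) (hA : Aᵀ = -A)
    (hRel : extBlock A u =
      ((Rmat n h d).map Complex.ofReal) * extBlock M v * ((Rmat n h d).map Complex.ofReal)ᵀ) :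
    dgUnitary n h d * quadPolyC n M v * (dgUnitary n h d)ᴴ = quadPolyC n A u := by
  have hUH : (dgUnitary n h d)ᴴ = NormedSpace.exp (-(quadArg n h d)) := by
    rw [dgUnitary, ← Matrix.exp_conjTranspose, quadArg_conjTranspose h d hh]
  rw [hUH, dgUnitary, ← Phi_extBlock M v, exp_conj_adIter]
  have hit := adIter_lemma h d hh (extBlock M v) (extBlock_antisym M v hM)
  have hRT : NormedSpace.exp (-(E2 h d)) = ((Rmat n h d).map Complex.ofReal)ᵀ := by
    rw [Rmat_map, ← Matrix.exp_transpose, E2_antisym h d hh]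
  calc ∑' k : ℕ, ((k.factorial : ℂ))⁻¹ •
        adIter (quadArg n h d) (Phi n (extBlock M v)) k
      = ∑' k : ℕ, ((k.factorial : ℂ))⁻¹ • Phi n (adIter (E2 h d) (extBlock M v) k) :=
        tsum_congr fun k => by rw [(hit k).2]
    _ = ∑' k : ℕ, PhiC n (((k.factorial : ℂ))⁻¹ • adIter (E2 h d) (extBlock M v) k) :=
        tsum_congr fun k => by rw [map_smul]; rfl
    _ = PhiC n (∑' k : ℕ, ((k.factorial : ℂ))⁻¹ • adIter (E2 h d) (extBlock M v) k) :=
        (ContinuousLinearMap.map_tsum (PhiC n) (summable_adIter _ _)).symm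
    _ = PhiC n (NormedSpace.exp (E2 h d) * extBlock M v * NormedSpace.exp (-(E2 h d))) := by
        rw [← exp_conj_adIter]
    _ = PhiC n (extBlock A u) := by rw [hRT, ← Rmat_map h d, ← hRel]
    _ = quadPolyC n A u := by
        rw [show PhiC n (extBlock A u) = Phi n (extBlock A u) from rfl, Phi_extBlock]
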